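/- The Rumin differential d_c := Π_0 ∘ d ∘ Π_E ∘ Π_0 squares to zero: (Π_0 ∘ d ∘ Π_E ∘ Π_0) ∘ (Π_0 ∘ d ∘ Π_E ∘ Π_0) = 0. -/

import Mathlib

/-- For an `s`-multicomplex with weights between `0` and `Q`, total differential `d`,
partial inverse `g` of `d₀`, `b := g∘d₀ − g∘d`,
`Π := (∑_{j=0}^{Q} b^j) ∘ g ∘ d + d ∘ (∑_{j=0}^{Q} b^j) ∘ g`, `Π_E := id − Π`, and
`Π₀ := id − g∘d₀ − d₀∘g`, the Rumin differential `d_c := Π₀ ∘ d ∘ Π_E ∘ Π₀` squares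
to zero. -/
theorem rumin_differential_squares_to_zero
    {R M : Type*} [CommRing R] [AddCommGroup M] [Module R M]
    (Mgr : ℤ × ℤ → Submodule R M)
    (hinternal : DirectSum.IsInternal Mgr)
    (s : ℕ) (D : ℕ → M →ₗ[R] M)
    (hDvan : ∀ i : ℕ, s ≤ i → D i = 0)
    (hDdeg : ∀ (i : ℕ) (a b : ℤ), ∀ x ∈ Mgr (a, b), D i x ∈ Mgr (a + (i : ℤ), b + 1 - (i : ℤ)))
    (hDD : ∀ n : ℕ, ∑ i ∈ Finset.range (n + 1), D i ∘ₗ D (n - i) = 0)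
    (Q : ℕ) (hQ : ∀ a b : ℤ, a < 0 ∨ (Q : ℤ) < a → Mgr (a, b) = ⊥)
    (d : M →ₗ[R] M) (hd : d = ∑ i ∈ Finset.range (s + 1), D i)
    (g : M →ₗ[R] M)
    (hgdeg : ∀ (a b : ℤ), ∀ x ∈ Mgr (a, b), g x ∈ Mgr (a, b - 1))
    (hgg : g ∘ₗ g = 0)
    (hgdg : g ∘ₗ D 0 ∘ₗ g = g)
    (hdgd : D 0 ∘ₗ g ∘ₗ D 0 = D 0)
    (b : M →ₗ[R] M) (hb : b = g ∘ₗ D 0 - g ∘ₗ d)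
    (Pi : M →ₗ[R] M)
    (hPi : Pi = ((∑ j ∈ Finset.range (Q + 1), b ^ j) ∘ₗ g) ∘ₗ d
        + (d ∘ₗ (∑ j ∈ Finset.range (Q + 1), b ^ j)) ∘ₗ g)
    (PiE : M →ₗ[R] M) (hPiE : PiE = LinearMap.id - Pi)
    (Pi0 : M →ₗ[R] M) (hPi0 : Pi0 = LinearMap.id - g ∘ₗ D 0 - D 0 ∘ₗ g) :
    (((Pi0 ∘ₗ d) ∘ₗ PiE) ∘ₗ Pi0) ∘ₗ (((Pi0 ∘ₗ d) ∘ₗ PiE) ∘ₗ Pi0) = 0 := by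
  classical
  -- Step 1 : `b ^ (Q+1) = 0`, proved using the grading.
  have hbQ : b ^ (Q + 1) = 0 := by
    set T : ℤ → Submodule R M := fun t => ⨆ (p : ℤ × ℤ) (_ : t ≤ p.1), Mgr p with hT
    have hT0 : ∀ x : M, x ∈ T 0 := by
      intro x
      have htop : (⨆ p, Mgr p) = ⊤ := hinternal.submodule_iSup_eq_top
      have hle : (⨆ p, Mgr p) ≤ T 0 := by
        apply iSup_le
        intro p
        by_cases h : (0 : ℤ) ≤ p.1
        · exact le_iSup_of_le p (le_iSup_of_le h le_rfl)
        · have : Mgr (p.1, p.2) = ⊥ := hQ p.1 p.2 (Or.inl (by omega))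
          exact this.le.trans bot_le
      exact hle (htop.ge Submodule.mem_top)
    have hcore : ∀ (t a c : ℤ), t ≤ a → ∀ x ∈ Mgr (a, c), b x ∈ T (t + 1) := by
      intro t a c hta x hx
      have hbx : b x = - ∑ i ∈ Finset.range s, g (D (i + 1) x) := by
        have hdx : d x = ∑ i ∈ Finset.range (s + 1), D i x := by
          rw [hd]; simp [LinearMap.sum_apply]
        have : b x = g (D 0 x) - g (d x) := by rw [hb]; simp
        rw [this, hdx, map_sum, Finset.sum_range_succ']
        abel
      rw [hbx]
      refine Submodule.neg_mem _ (Submodule.sum_mem _ ?_)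
      intro i _
      have h1 : D (i + 1) x ∈ Mgr (a + ((i + 1 : ℕ) : ℤ), c + 1 - ((i + 1 : ℕ) : ℤ)) :=
        hDdeg (i + 1) a c x hx
      have h2 : g (D (i + 1) x) ∈
          Mgr (a + ((i + 1 : ℕ) : ℤ), c + 1 - ((i + 1 : ℕ) : ℤ) - 1) :=
        hgdeg _ _ _ h1
      exact Submodule.mem_iSup_of_mem (a + ((i + 1 : ℕ) : ℤ), c + 1 - ((i + 1 : ℕ) : ℤ) - 1)
        (Submodule.mem_iSup_of_mem (by push_cast; omega) h2)
    have hstep : ∀ (t : ℤ) (x : M), x ∈ T t → b x ∈ T (t + 1) := by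
      intro t x hx
      rw [hT] at hx
      refine Submodule.iSup_induction (motive := fun y => b y ∈ T (t + 1))
        (fun p : ℤ × ℤ => ⨆ (_ : t ≤ p.1), Mgr p) hx ?_ ?_ ?_
      · intro p y hy
        have hy' : y ∈ ⨆ (_ : t ≤ p.1), Mgr p := hy
        by_cases h : t ≤ p.1
        · rw [iSup_pos h] at hy'
          exact hcore t p.1 p.2 h y hy'
        · rw [iSup_neg h] at hy'
          rename' hy' => hy
          simp only [Submodule.mem_bot] at hy
          subst hy
          simp [Submodule.zero_mem]
      · simp [Submodule.zero_mem]
      · intro y z hy hz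
        rw [map_add]
        exact Submodule.add_mem _ hy hz
    have hiter : ∀ (k : ℕ) (x : M), (b ^ k) x ∈ T k := by
      intro k
      induction k with
      | zero => intro x; simpa using hT0 x
      | succ n ih =>
        intro x
        have : (b ^ (n + 1)) x = b ((b ^ n) x) := by
          rw [pow_succ']; simp [Module.End.mul_apply]
        rw [this, show ((n + 1 : ℕ) : ℤ) = (n : ℤ) + 1 by push_cast; ring]
        exact hstep n ((b ^ n) x) (ih x)
    have hbot : T ((Q : ℤ) + 1) = ⊥ := by
      rw [eq_bot_iff]
      apply iSup_le
      intro p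
      apply iSup_le
      intro hp
      have : Mgr (p.1, p.2) = ⊥ := hQ p.1 p.2 (Or.inr (by omega))
      exact this.le
    ext x
    have h1 : (b ^ (Q + 1)) x ∈ T ((Q + 1 : ℕ) : ℤ) := hiter (Q + 1) x
    have h2 : T ((Q + 1 : ℕ) : ℤ) = ⊥ := by
      rw [show ((Q + 1 : ℕ) : ℤ) = (Q : ℤ) + 1 by push_cast; ring]
      exact hbot
    rw [h2] at h1
    simpa using h1
  -- Step 2 : pass to multiplicative notation in the endomorphism ring.
  simp only [← Module.End.mul_eq_comp, ← Module.End.one_eq_id] at hgg hgdg hdgd hb hPi hPiE hPi0 ⊢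
  -- `D 0 * D 0 = 0`
  have hee : D 0 * D 0 = 0 := by
    have h := hDD 0
    simpa [Module.End.mul_eq_comp] using h
  -- `d * d = 0`
  have hdd : d * d = 0 := by
    have hzero : ∀ n, ∑ i ∈ Finset.range (n + 1), D i * D (n - i) = 0 := by
      intro n
      have h := hDD n
      simpa [Module.End.mul_eq_comp] using h
    have hbig :
        ∑ p ∈ (Finset.range (2 * s + 2) ×ˢ Finset.range (2 * s + 2)).filter
          (fun p => p.1 + p.2 < 2 * s + 2), D p.1 * D p.2 = 0 := by
      have hre :
          ∑ p ∈ (Finset.range (2 * s + 2) ×ˢ Finset.range (2 * s + 2)).filter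
              (fun p => p.1 + p.2 < 2 * s + 2), D p.1 * D p.2
            = ∑ n ∈ Finset.range (2 * s + 2), ∑ i ∈ Finset.range (n + 1),
                D i * D (n - i) := by
        rw [Finset.sum_sigma' (Finset.range (2 * s + 2)) (fun n => Finset.range (n + 1))
          (fun n i => D i * D (n - i))]
        refine Finset.sum_nbij' (fun p : ℕ × ℕ => (⟨p.1 + p.2, p.1⟩ : Σ _ : ℕ, ℕ))
          (fun q => (q.2, q.1 - q.2)) ?_ ?_ ?_ ?_ ?_
        · intro p hp
          simp only [Finset.mem_filter, Finset.mem_product, Finset.mem_range] at hp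
          simp only [Finset.mem_sigma, Finset.mem_range]
          omega
        · intro q hq
          simp only [Finset.mem_sigma, Finset.mem_range] at hq
          simp only [Finset.mem_filter, Finset.mem_product, Finset.mem_range]
          omega
        · intro p hp
          simp
        · intro q hq
          simp only [Finset.mem_sigma, Finset.mem_range] at hq
          ext <;> simp <;> omega
        · intro p hp
          simp
      rw [hre]
      exact Finset.sum_eq_zero fun n _ => hzero n
    have hsq : d * d = ∑ p ∈ (Finset.range (2 * s + 2) ×ˢ Finset.range (2 * s + 2)).filter
        (fun p => p.1 + p.2 < 2 * s + 2), D p.1 * D p.2 := by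
      rw [hd, Finset.sum_mul_sum, ← Finset.sum_product'
        (f := fun i j => D i * D j)]
      refine Finset.sum_subset ?_ ?_
      · intro p hp
        simp only [Finset.mem_product, Finset.mem_range] at hp
        simp only [Finset.mem_filter, Finset.mem_product, Finset.mem_range]
        omega
      · intro p hp hnp
        simp only [Finset.mem_filter, Finset.mem_product, Finset.mem_range] at hp
        simp only [Finset.mem_product, Finset.mem_range] at hnp
        have : s ≤ p.1 ∨ s ≤ p.2 := by omega
        rcases this with h | h
        · rw [hDvan p.1 h, zero_mul]
        · rw [hDvan p.2 h, mul_zero]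
    rw [hsq, hbig]
  -- geometric series
  set N : M →ₗ[R] M := ∑ j ∈ Finset.range (Q + 1), b ^ j with hNdef
  have hN1 : N * (1 - b) = 1 := by
    have h := geom_sum_mul b (Q + 1)
    have h2 : N * (b - 1) = -1 := by rw [hNdef, h, hbQ]; abel
    have : N * (1 - b) = -(N * (b - 1)) := by noncomm_ring
    rw [this, h2, neg_neg]
  have h1N : (1 - b) * N = 1 := by
    have h := mul_geom_sum b (Q + 1)
    have h2 : (b - 1) * N = -1 := by rw [hNdef, h, hbQ]; abel
    have : (1 - b) * N = -((b - 1) * N) := by noncomm_ring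
    rw [this, h2, neg_neg]
  -- basic derived identities
  have hgd : g * d = g * D 0 - b := by rw [hb]; noncomm_ring
  have hgdg' : (g * d) * g = (1 - b) * g := by
    calc (g * d) * g = (g * D 0 - b) * g := by rw [hgd]
      _ = g * (D 0 * g) - b * g := by noncomm_ring
      _ = g - b * g := by rw [hgdg]
      _ = (1 - b) * g := by noncomm_ring
  -- `Pi * g = g`
  have hPig : Pi * g = g := by
    calc Pi * g = N * ((g * d) * g) + d * N * (g * g) := by rw [hPi]; noncomm_ring
      _ = N * ((1 - b) * g) + d * N * (g * g) := by rw [hgdg']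
      _ = N * ((1 - b) * g) + d * N * 0 := by rw [hgg]
      _ = (N * (1 - b)) * g := by noncomm_ring
      _ = g := by rw [hN1]; noncomm_ring
  have hEg : PiE * g = 0 := by
    have : PiE * g = g - Pi * g := by rw [hPiE]; noncomm_ring
    rw [this, hPig, sub_self]
  -- `Pi * d = d * Pi`
  have hPid : Pi * d = d * N * g * d := by
    calc Pi * d = N * (g * (d * d)) + d * N * g * d := by rw [hPi]; noncomm_ring
      _ = N * (g * 0) + d * N * g * d := by rw [hdd]
      _ = d * N * g * d := by noncomm_ring
  have hdPi : d * Pi = d * N * g * d := by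
    calc d * Pi = d * N * g * d + (d * d) * (N * g) := by rw [hPi]; noncomm_ring
      _ = d * N * g * d + 0 * (N * g) := by rw [hdd]
      _ = d * N * g * d := by noncomm_ring
  have hEd : PiE * d = d * PiE := by
    calc PiE * d = d - Pi * d := by rw [hPiE]; noncomm_ring
      _ = d - d * Pi := by rw [hPid, hdPi]
      _ = d * PiE := by rw [hPiE]; noncomm_ring
  -- `D 0 * g * d * PiE = 0`
  have hegdN : D 0 * (g * d) * N = D 0 := by
    calc D 0 * (g * d) * N = D 0 * (g * D 0 - b) * N := by rw [hgd]
      _ = ((D 0 * (g * D 0)) - D 0 * b) * N := by noncomm_ring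
      _ = (D 0 - D 0 * b) * N := by rw [hdgd]
      _ = D 0 * ((1 - b) * N) := by noncomm_ring
      _ = D 0 := by rw [h1N]; noncomm_ring
  have hegdE : D 0 * g * d * PiE = 0 := by
    have h1 : D 0 * g * d * Pi = D 0 * g * d := by
      calc D 0 * g * d * Pi
          = (D 0 * (g * d) * N) * (g * d) + D 0 * (g * (d * d)) * (N * g) := by
            rw [hPi]; noncomm_ring
        _ = (D 0 * (g * d) * N) * (g * d) + D 0 * (g * 0) * (N * g) := by rw [hdd]
        _ = (D 0 * (g * d) * N) * (g * d) := by noncomm_ring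
        _ = D 0 * (g * d) := by rw [hegdN]
        _ = D 0 * g * d := by noncomm_ring
    have h2 : D 0 * g * d * PiE = D 0 * g * d - D 0 * g * d * Pi := by
      rw [hPiE]; noncomm_ring
    rw [h2, h1, sub_self]
  -- `Pi0` is idempotent
  have hP0 : Pi0 * Pi0 = Pi0 := by
    have h : Pi0 * Pi0 = 1 - g * D 0 - D 0 * g - g * D 0 - D 0 * g
        + (g * (D 0 * g)) * D 0 + g * ((D 0 * D 0) * g)
        + D 0 * ((g * g) * D 0) + (D 0 * (g * D 0)) * g := by
      rw [hPi0]; noncomm_ring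
    rw [h, hgdg, hee, hgg, hdgd, hPi0]
    noncomm_ring
  -- key identity
  have key : (d * PiE) * Pi0 * (d * PiE) = 0 := by
    have hdEdE : (d * PiE) * (d * PiE) = 0 := by
      have h1 : (d * PiE) * (d * PiE) = d * ((PiE * d) * PiE) := by noncomm_ring
      rw [h1, hEd]
      calc d * ((d * PiE) * PiE) = (d * d) * (PiE * PiE) := by noncomm_ring
        _ = 0 * (PiE * PiE) := by rw [hdd]
        _ = 0 := by noncomm_ring
    have hexp : (d * PiE) * Pi0 * (d * PiE)
        = (d * PiE) * (d * PiE) - (d * (PiE * g)) * (D 0 * (d * PiE))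
          - (d * PiE) * (D 0 * g * d * PiE) := by
      rw [hPi0]; noncomm_ring
    rw [hexp, hdEdE, hEg, hegdE]
    noncomm_ring
  -- conclusion
  have hfinal : ((Pi0 * d) * PiE) * Pi0 * (((Pi0 * d) * PiE) * Pi0)
      = Pi0 * ((d * PiE) * (Pi0 * Pi0) * (d * PiE)) * Pi0 := by noncomm_ring
  calc ((Pi0 * d) * PiE) * Pi0 * (((Pi0 * d) * PiE) * Pi0)
      = Pi0 * ((d * PiE) * (Pi0 * Pi0) * (d * PiE)) * Pi0 := hfinal
    _ = Pi0 * ((d * PiE) * Pi0 * (d * PiE)) * Pi0 := by rw [hP0]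
    _ = Pi0 * 0 * Pi0 := by rw [key]
    _ = 0 := by noncomm_ring
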